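/- arXiv:1609.04330 — 2 statements merged into one kernel-verified Lean document; each statement's English description precedes it below -/
import Mathlib

section
/- Let p be an odd prime and A, B integers not divisible by p. Then the number of triples (x0, x1, x2) modulo p with x2 and (x0,x1) not both zero (i.e. x2 ≢ 0 mod p and (x0,x1) ≢ (0,0) mod p) satisfying A·x0² + B·x1² − x2² ≡ 0 mod p equals (p − 1)·(p − (−AB | p)), where (· | p) denotes the Legendre symbol. -/
open Finset


variable {F : Type*} [Field F] [Fintype F] [DecidableEq F]

lemma qc_inv (a : F) : quadraticChar F a⁻¹ = quadraticChar F a := by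
  rw [← MulChar.inv_apply', (quadraticChar_isQuadratic F).inv]

lemma count_sq (hF : ringChar F ≠ 2) {a : F} (ha : a ≠ 0) (u : F) :
    ((univ.filter (fun x : F => a * x ^ 2 = u)).card : ℤ)
      = quadraticChar F (a⁻¹ * u) + 1 := by
  rw [← quadraticChar_card_sqrts hF (a⁻¹ * u)]
  norm_cast
  rw [Set.toFinset_setOf]
  congr 1
  apply filter_congr
  intro x _
  simp only [eq_inv_mul_iff_mul_eq₀ ha]

variable {F : Type*} [Field F] [Fintype F] [DecidableEq F]

lemma sum_shift_scale (hF : ringChar F ≠ 2) {a : F} (ha : a ≠ 0) :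
    ∑ u : F, (quadraticChar F (a⁻¹ * u) : ℤ) = 0 := by
  rw [← quadraticChar_sum_zero hF]
  exact (Fintype.sum_equiv (Equiv.mulLeft₀ a ha) _ _
    (fun w => by simp [Equiv.mulLeft₀, inv_mul_cancel_left₀ ha])).symm

lemma sum_shift_scale' (hF : ringChar F ≠ 2) {b : F} (hb : b ≠ 0) (c : F) :
    ∑ u : F, (quadraticChar F (b⁻¹ * (c - u)) : ℤ) = 0 := by
  rw [← quadraticChar_sum_zero hF]
  refine (Fintype.sum_equiv ((Equiv.mulLeft₀ b hb).trans (Equiv.subLeft c)) _ _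
    (fun w => ?_)).symm
  simp [Equiv.mulLeft₀, Equiv.subLeft, inv_mul_cancel_left₀ hb]

lemma sum_jacobi (hF : ringChar F ≠ 2) {c : F} (hc : c ≠ 0) :
    ∑ u : F, (quadraticChar F u * quadraticChar F (c - u) : ℤ)
      = - quadraticChar F (-1) := by
  have h1 : ∑ u : F, (quadraticChar F u * quadraticChar F (c - u) : ℤ)
      = ∑ t : F, (quadraticChar F (c * t) * quadraticChar F (c - c * t) : ℤ) :=
    (Fintype.sum_equiv (Equiv.mulLeft₀ c hc) _ _ (fun w => by simp [Equiv.mulLeft₀])).symm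
  rw [h1]
  have h2 : ∀ t : F, (quadraticChar F (c * t) * quadraticChar F (c - c * t) : ℤ)
      = quadraticChar F t * quadraticChar F (1 - t) := by
    intro t
    have : c - c * t = c * (1 - t) := by ring
    rw [this, map_mul, map_mul]
    have h := quadraticChar_sq_one hc
    linear_combination ((quadraticChar F t : ℤ) * quadraticChar F (1 - t)) * h
  rw [Fintype.sum_congr _ _ h2]
  have : ∑ t : F, (quadraticChar F t * quadraticChar F (1 - t) : ℤ)
      = jacobiSum (quadraticChar F) (quadraticChar F) := rfl
  rw [this]
  nth_rewrite 2 [← (quadraticChar_isQuadratic F).inv]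
  exact jacobiSum_nontrivial_inv (quadraticChar_ne_one hF)


lemma key_sum (hF : ringChar F ≠ 2) {a b c : F} (ha : a ≠ 0) (hb : b ≠ 0) (hc : c ≠ 0)
    (hss : ∑ u : F, (quadraticChar F (a⁻¹ * u) : ℤ) = 0)
    (hss' : ∑ u : F, (quadraticChar F (b⁻¹ * (c - u)) : ℤ) = 0)
    (hj : ∑ u : F, (quadraticChar F u * quadraticChar F (c - u) : ℤ)
      = - quadraticChar F (-1))
    (hqi : ∀ x : F, quadraticChar F x⁻¹ = quadraticChar F x) :
    ∑ u : F, ((quadraticChar F (a⁻¹ * u) : ℤ) + 1) * ((quadraticChar F (b⁻¹ * (c - u)) : ℤ) + 1)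
      = Fintype.card F - quadraticChar F (-(a * b)) := by
  have expand : ∀ u : F,
      ((quadraticChar F (a⁻¹ * u) : ℤ) + 1) * ((quadraticChar F (b⁻¹ * (c - u)) : ℤ) + 1)
      = (quadraticChar F a⁻¹ * quadraticChar F b⁻¹ : ℤ) *
          (quadraticChar F u * quadraticChar F (c - u))
        + quadraticChar F (a⁻¹ * u) + quadraticChar F (b⁻¹ * (c - u)) + 1 := by
    intro u
    rw [map_mul, map_mul]
    push_cast
    ring
  rw [Fintype.sum_congr _ _ expand]
  simp only [Finset.sum_add_distrib, ← Finset.mul_sum, hss, hss', hj, Finset.sum_const,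
    Finset.card_univ, nsmul_eq_mul, mul_one]
  have : (quadraticChar F a⁻¹ * quadraticChar F b⁻¹ : ℤ) * (- quadraticChar F (-1))
      = - quadraticChar F (-(a*b)) := by
    rw [hqi, hqi]
    rw [show (-(a*b) : F) = a * b * (-1) by ring, map_mul, map_mul]
    push_cast
    ring
  rw [this]
  ring


lemma conic_card (hF : ringChar F ≠ 2) {a b c : F} (ha : a ≠ 0) (hb : b ≠ 0) (hc : c ≠ 0)
    (hcount : ∀ (d : F), d ≠ 0 → ∀ u : F,
      ((univ.filter (fun x : F => d * x ^ 2 = u)).card : ℤ) = quadraticChar F (d⁻¹ * u) + 1)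
    (hkey : ∑ u : F, ((quadraticChar F (a⁻¹ * u) : ℤ) + 1) *
        ((quadraticChar F (b⁻¹ * (c - u)) : ℤ) + 1)
      = Fintype.card F - quadraticChar F (-(a * b))) :
    ((univ.filter (fun v : F × F => a * v.1 ^ 2 + b * v.2 ^ 2 = c)).card : ℤ)
      = Fintype.card F - quadraticChar F (-(a * b)) := by
  rw [← hkey]
  have h0 : (univ.filter (fun v : F × F => a * v.1 ^ 2 + b * v.2 ^ 2 = c)).card
      = ∑ u : F, ((univ.filter (fun v : F × F => a * v.1 ^ 2 + b * v.2 ^ 2 = c)).filter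
          (fun v => a * v.1 ^ 2 = u)).card :=
    Finset.card_eq_sum_card_fiberwise (fun v _ => Finset.mem_univ _)
  have h1 : ∀ u : F, ((univ.filter (fun v : F × F => a * v.1 ^ 2 + b * v.2 ^ 2 = c)).filter
          (fun v => a * v.1 ^ 2 = u))
      = (univ.filter (fun x : F => a * x ^ 2 = u)) ×ˢ
        (univ.filter (fun y : F => b * y ^ 2 = c - u)) := by
    intro u
    rw [← Finset.filter_product, ← Finset.univ_product_univ, Finset.filter_filter]
    apply filter_congr
    rintro ⟨x, y⟩ _
    constructor
    · rintro ⟨h, h'⟩; exact ⟨h', by linear_combination h - h'⟩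
    · rintro ⟨h, h'⟩; exact ⟨by linear_combination h + h', h⟩
  rw [h0]
  push_cast
  apply Finset.sum_congr rfl
  intro u _
  rw [h1 u, Finset.card_product]
  push_cast
  rw [hcount a ha u, hcount b hb (c - u)]

theorem stmt_0 (p : ℕ) [Fact p.Prime] (hp : p ≠ 2) (A B : ℤ)
    (hA : ¬ (p : ℤ) ∣ A) (hB : ¬ (p : ℤ) ∣ B) :
    ((Finset.univ.filter (fun v : ZMod p × ZMod p × ZMod p =>
        v.2.2 ≠ 0 ∧ (v.1, v.2.1) ≠ (0, 0) ∧
        (A : ZMod p) * v.1 ^ 2 + (B : ZMod p) * v.2.1 ^ 2 - v.2.2 ^ 2 = 0)).card : ℤ)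
      = ((p : ℤ) - 1) * ((p : ℤ) - legendreSym p (-(A * B))) := by
  have hF : ringChar (ZMod p) ≠ 2 := by
    rw [ZMod.ringChar_zmod_n]; exact hp
  have haz : (A : ZMod p) ≠ 0 := fun h => hA ((ZMod.intCast_zmod_eq_zero_iff_dvd A p).mp h)
  have hbz : (B : ZMod p) ≠ 0 := fun h => hB ((ZMod.intCast_zmod_eq_zero_iff_dvd B p).mp h)
  have conic : ∀ c : ZMod p, c ≠ 0 →
      ((univ.filter (fun v : ZMod p × ZMod p =>
        (A : ZMod p) * v.1 ^ 2 + (B : ZMod p) * v.2 ^ 2 = c)).card : ℤ)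
      = Fintype.card (ZMod p) - quadraticChar (ZMod p) (-((A : ZMod p) * (B : ZMod p))) := by
    intro c hc
    exact conic_card hF haz hbz hc (fun d hd u => count_sq hF hd u)
      (key_sum hF haz hbz hc (sum_shift_scale hF haz) (sum_shift_scale' hF hbz c)
        (sum_jacobi hF hc) (fun x => qc_inv x))
  set a : ZMod p := (A : ZMod p) with haA
  set b : ZMod p := (B : ZMod p) with hbB
  have ha : a ≠ 0 := fun h => hA ((ZMod.intCast_zmod_eq_zero_iff_dvd A p).mp h)
  have hb : b ≠ 0 := fun h => hB ((ZMod.intCast_zmod_eq_zero_iff_dvd B p).mp h)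
  -- simplify the predicate
  have hfilter : (Finset.univ.filter (fun v : ZMod p × ZMod p × ZMod p =>
        v.2.2 ≠ 0 ∧ (v.1, v.2.1) ≠ (0, 0) ∧
        a * v.1 ^ 2 + b * v.2.1 ^ 2 - v.2.2 ^ 2 = 0))
      = Finset.univ.filter (fun v : ZMod p × ZMod p × ZMod p =>
        v.2.2 ≠ 0 ∧ a * v.1 ^ 2 + b * v.2.1 ^ 2 = v.2.2 ^ 2) := by
    apply filter_congr
    rintro ⟨x, y, z⟩ _
    constructor
    · rintro ⟨h1, _, h3⟩; exact ⟨h1, by linear_combination h3⟩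
    · rintro ⟨h1, h2⟩
      refine ⟨h1, ?_, by linear_combination h2⟩
      rintro h
      have hx : x = 0 := congrArg Prod.fst h
      have hy : y = 0 := congrArg Prod.snd h
      rw [hx, hy] at h2
      simp at h2
      exact h1 (pow_eq_zero_iff (by norm_num) |>.mp h2.symm)
  rw [hfilter]
  set s := Finset.univ.filter (fun v : ZMod p × ZMod p × ZMod p =>
        v.2.2 ≠ 0 ∧ a * v.1 ^ 2 + b * v.2.1 ^ 2 = v.2.2 ^ 2) with hs
  set t := (Finset.univ : Finset (ZMod p)).filter (fun z => z ≠ 0) with ht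
  have hfib : s.card = ∑ z ∈ t, (s.filter (fun v => v.2.2 = z)).card := by
    apply Finset.card_eq_sum_card_fiberwise
    intro v hv
    rw [hs, mem_coe, mem_filter] at hv
    rw [ht, mem_coe, mem_filter]
    exact ⟨mem_univ _, hv.2.1⟩
  have hfibcard : ∀ z ∈ t, ((s.filter (fun v => v.2.2 = z)).card : ℤ)
      = Fintype.card (ZMod p) - quadraticChar (ZMod p) (-(a * b)) := by
    intro z hz
    rw [ht, mem_filter] at hz
    have hz0 : z ≠ 0 := hz.2
    have hmap : (univ.filter (fun v : ZMod p × ZMod p =>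
          a * v.1 ^ 2 + b * v.2 ^ 2 = z ^ 2)).map
        ⟨fun v => (v.1, v.2, z), by intro v w h; simpa [Prod.ext_iff] using h⟩
        = s.filter (fun v => v.2.2 = z) := by
      ext ⟨x, y, w⟩
      simp only [mem_map, mem_filter, mem_univ, true_and, Function.Embedding.coeFn_mk, hs,
        Prod.ext_iff]
      constructor
      · rintro ⟨⟨x', y'⟩, hcond, hx, hy, hw⟩
        subst hx; subst hy
        exact ⟨⟨hw ▸ hz0, by rw [← hw]; exact hcond⟩, hw.symm⟩
      · rintro ⟨⟨h1, h2⟩, h3⟩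
        exact ⟨(x, y), by rw [h3] at h2; exact h2, rfl, rfl, h3.symm⟩
    rw [← hmap, Finset.card_map]
    exact conic (z ^ 2) (pow_ne_zero 2 hz0)
  have htcard : t.card = p - 1 := by
    rw [ht, Finset.filter_ne', Finset.card_erase_of_mem (mem_univ _), card_univ, ZMod.card]
  have hleg : (legendreSym p (-(A * B)) : ℤ) = quadraticChar (ZMod p) (-(a * b)) := by
    rw [legendreSym]
    congr 1
    push_cast
    ring
  have hp1 : 1 ≤ p := (Fact.out : p.Prime).one_lt.le
  calc (s.card : ℤ) = ∑ z ∈ t, ((s.filter (fun v => v.2.2 = z)).card : ℤ) := by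
        rw [hfib]; push_cast; rfl
    _ = ∑ z ∈ t, ((Fintype.card (ZMod p) : ℤ) - quadraticChar (ZMod p) (-(a * b))) :=
        Finset.sum_congr rfl hfibcard
    _ = (t.card : ℤ) * ((Fintype.card (ZMod p) : ℤ) - quadraticChar (ZMod p) (-(a * b))) := by
        rw [Finset.sum_const, nsmul_eq_mul]
    _ = ((p : ℤ) - 1) * ((p : ℤ) - legendreSym p (-(A * B))) := by
        rw [htcard, hleg, ZMod.card]
        push_cast [hp1]
        ring
end

section
/- Let p be an odd prime, χ ∈ {−1, 1}, and v ≥ 1 an integer. Define σ by: σ = (1 − 1/p)·((1 + χ) + ((v−1)/2)·(1 − 1/p)·(1 + χ)) if v is odd, and σ = (1 − 1/p)·((1 + χ) + ((v−2)/2)·(1 − 1/p)·(1 + χ) + (1 − χ/p)) if v is even. Then (1 − 2/p)·Σ_{k=0}^{v} χ^k ≤ σ ≤ Σ_{k=0}^{v} χ^k. -/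
open Finset

theorem stmt_6 (p : ℕ) (hp : p.Prime) (hp2 : p ≠ 2) (χ : ℚ) (hχ : χ = -1 ∨ χ = 1)
    (v : ℕ) (hv : 1 ≤ v) :
    (1 - 2 / (p : ℚ)) * (∑ k ∈ Finset.range (v + 1), χ ^ k) ≤
      (if Odd v then
        (1 - 1 / (p : ℚ)) * ((1 + χ) + (((v : ℚ) - 1) / 2) * (1 - 1 / (p : ℚ)) * (1 + χ))
      else
        (1 - 1 / (p : ℚ)) * ((1 + χ) + (((v : ℚ) - 2) / 2) * (1 - 1 / (p : ℚ)) * (1 + χ)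
          + (1 - χ / (p : ℚ)))) ∧
    (if Odd v then
        (1 - 1 / (p : ℚ)) * ((1 + χ) + (((v : ℚ) - 1) / 2) * (1 - 1 / (p : ℚ)) * (1 + χ))
      else
        (1 - 1 / (p : ℚ)) * ((1 + χ) + (((v : ℚ) - 2) / 2) * (1 - 1 / (p : ℚ)) * (1 + χ)
          + (1 - χ / (p : ℚ)))) ≤ ∑ k ∈ Finset.range (v + 1), χ ^ k := by
  have hp3n : 3 ≤ p := by
    have h2 := hp.two_le
    rcases Nat.lt_or_ge p 3 with h | h
    · interval_cases p <;> simp_all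
    · exact h
  have hp3 : (3:ℚ) ≤ (p:ℚ) := by exact_mod_cast hp3n
  have hp0 : (0:ℚ) < (p:ℚ) := by linarith
  set r : ℚ := 1 / (p:ℚ) with hr
  have hr0 : 0 < r := by positivity
  have hr3 : r ≤ 1/3 := by
    rw [hr, div_le_div_iff₀ hp0 (by norm_num)]; linarith
  have h2r : 2 / (p:ℚ) = 2 * r := by rw [hr]; ring
  have hv1 : (1:ℚ) ≤ (v:ℚ) := by exact_mod_cast hv
  rcases hχ with rfl | rfl
  · have hsum : ∑ k ∈ Finset.range (v + 1), (-1:ℚ) ^ k = if Odd v then 0 else 1 := by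
      rw [neg_one_geom_sum]
      by_cases ho : Odd v <;> simp [Nat.even_add_one, Nat.not_even_iff_odd, ho]
    rw [hsum]
    have hχr : (-1:ℚ) / (p:ℚ) = -r := by rw [hr]; ring
    rcases Nat.even_or_odd v with he | ho
    · have hno : ¬ Odd v := Nat.not_odd_iff_even.mpr he
      simp only [hno, if_false, hχr, h2r]
      constructor <;> nlinarith [sq_nonneg r, hr0, hr3]
    · simp only [ho, if_true]
      constructor <;> nlinarith [hr0]
  · have hsum : ∑ k ∈ Finset.range (v + 1), (1:ℚ) ^ k = (v:ℚ) + 1 := by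
      simp
    rw [hsum, h2r]
    have hχr : (1:ℚ) / (p:ℚ) = r := hr.symm
    rw [hχr]
    rcases Nat.even_or_odd v with he | ho
    · have hno : ¬ Odd v := Nat.not_odd_iff_even.mpr he
      have hv2 : (2:ℚ) ≤ (v:ℚ) := by
        have : 2 ≤ v := by
          rcases he with ⟨k, hk⟩; omega
        exact_mod_cast this
      simp only [hno, if_false]
      constructor <;> nlinarith [hr0, hr3, mul_nonneg (sq_nonneg r) (by linarith : (0:ℚ) ≤ (v:ℚ) - 2), mul_nonneg hr0.le (by linarith : (0:ℚ) ≤ (v:ℚ) - 2)]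
    · simp only [ho, if_true]
      constructor <;> nlinarith [hr0, hr3, mul_nonneg (sq_nonneg r) (by linarith : (0:ℚ) ≤ (v:ℚ) - 1), mul_nonneg hr0.le (by linarith : (0:ℚ) ≤ (v:ℚ) - 1)]
end
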